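/- Fix a ∈ (0,1/2). The V-path quasi-metric ρ on the dyadic rationals of [0,1] is a K-quasi-metric with K = 2(1-a)/a; i.e., ρ(z,z'') ≤ K·max{ρ(z,z'), ρ(z',z'')} for all z, z', z''. -/

import Mathlib

/-- A rational is dyadic if it can be written as `k / 2^n`. -/
def IsDyadic (q : ℚ) : Prop := ∃ (k : ℤ) (n : ℕ), q = (k : ℚ) / 2 ^ n

/-- Membership in `Z`, the set of dyadic rationals of `[0,1]`. -/
def InZ (q : ℚ) : Prop := 0 ≤ q ∧ q ≤ 1 ∧ IsDyadic q

/-- The level of a dyadic rational: the least `n` with `q = k / 2^n` for some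
integer `k`.  The endpoints `0` and `1` have level `0`. -/
noncomputable def level (q : ℚ) : ℕ := sInf {n : ℕ | ∃ k : ℤ, q = (k : ℚ) / 2 ^ n}

/-- The left neighbor `l(z) = (k-1)/2^n` of `z = k/2^n` (in lowest terms,
`k` odd, `n ≥ 1`); points of level `0` are fixed. -/
noncomputable def lnb (q : ℚ) : ℚ :=
  if level q = 0 then q else q - (1 / 2 : ℚ) ^ level q

/-- The right neighbor `r(z) = (k+1)/2^n` of `z = k/2^n` (in lowest terms,
`k` odd, `n ≥ 1`); points of level `0` are fixed. -/
noncomputable def rnb (q : ℚ) : ℚ :=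
  if level q = 0 then q else q + (1 / 2 : ℚ) ^ level q

/-- `ρ` is the V-path quasi-metric on the dyadic rationals of `[0,1]` with
parameter `a`: it is symmetric, vanishes on the diagonal, is nonnegative on
`Z`, satisfies `ρ(0,1) = 1`, and decomposes along the unique V-shaped path:
for `z < z'` in `Z` the first edge taken from the higher-level endpoint has
length `a^level`. These properties characterize the sum of edge lengths
`a^{ℓ(w)}` along the V-shaped path joining `z` and `z'`. -/
def IsVPath (a : ℝ) (ρ : ℚ → ℚ → ℝ) : Prop :=
  (∀ z z', ρ z z' = ρ z' z) ∧
  (∀ z, ρ z z = 0) ∧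
  (∀ z z', InZ z → InZ z' → 0 ≤ ρ z z') ∧
  ρ 0 1 = 1 ∧
  (∀ z z', InZ z → InZ z' → z < z' → 1 ≤ level z → level z' ≤ level z →
    ρ z z' = a ^ level z + ρ (rnb z) z') ∧
  (∀ z z', InZ z → InZ z' → z < z' → level z < level z' →
    ρ z z' = ρ z (lnb z') + a ^ level z')

/-- `τ_n = a + a² + ⋯ + a^{n-1} + 2 a^n`. -/
noncomputable def tau (a : ℝ) (n : ℕ) : ℝ :=
  (∑ i ∈ Finset.Ico 1 n, a ^ i) + 2 * a ^ n


namespace VPAux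

/-- `q` is a multiple of `2⁻ⁿ`. -/
def Mq (q : ℚ) (n : ℕ) : Prop := ∃ k : ℤ, q = (k : ℚ) / 2 ^ n

lemma half_pow (n : ℕ) : (1/2 : ℚ) ^ n = 1 / 2 ^ n := by
  rw [div_pow, one_pow]

lemma Mq_level {q : ℚ} (h : IsDyadic q) : Mq q (level q) := by
  obtain ⟨k, n, hk⟩ := h
  exact Nat.sInf_mem (⟨n, k, hk⟩ : Set.Nonempty {n : ℕ | ∃ k : ℤ, q = (k : ℚ) / 2 ^ n})

lemma level_le {q : ℚ} {n : ℕ} (h : Mq q n) : level q ≤ n := Nat.sInf_le h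

lemma Mq_succ {q : ℚ} {n : ℕ} (h : Mq q n) : Mq q (n+1) := by
  obtain ⟨k, hk⟩ := h
  refine ⟨2*k, ?_⟩
  rw [hk]; push_cast; field_simp; ring

lemma Mq_mono {q : ℚ} {n m : ℕ} (h : Mq q n) (hnm : n ≤ m) : Mq q m := by
  induction hnm with
  | refl => exact h
  | step _ ih => exact Mq_succ ih

lemma Mq_dyadic {q : ℚ} {n : ℕ} (h : Mq q n) : IsDyadic q := by
  obtain ⟨k, hk⟩ := h; exact ⟨k, n, hk⟩

lemma gap {p q : ℚ} {n : ℕ} (hp : Mq p n) (hq : Mq q n) (hpq : p < q) :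
    p + (1/2 : ℚ) ^ n ≤ q := by
  obtain ⟨k, hk⟩ := hp
  obtain ⟨j, hj⟩ := hq
  rw [hk, hj, half_pow]
  rw [hk, hj] at hpq
  have h2 : (0:ℚ) < 2 ^ n := by positivity
  have hkj : (k:ℚ) < j := by
    exact (div_lt_div_iff_of_pos_right h2).mp hpq
  have hkj' : k + 1 ≤ j := by exact_mod_cast hkj
  have : ((k:ℚ) + 1) ≤ j := by exact_mod_cast hkj'
  rw [← add_div]
  apply div_le_div_of_nonneg_right ?_ (le_of_lt h2) |>.trans_eq rfl
  · linarith

lemma Mq_zero_zero : Mq 0 0 := ⟨0, by norm_num⟩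
lemma Mq_one_zero : Mq 1 0 := ⟨1, by norm_num⟩

lemma level_zero' : level 0 = 0 := Nat.le_zero.mp (level_le Mq_zero_zero)
lemma level_one' : level 1 = 0 := Nat.le_zero.mp (level_le Mq_one_zero)

lemma level_zero_cases {q : ℚ} (hq : InZ q) (h : level q = 0) : q = 0 ∨ q = 1 := by
  have := Mq_level hq.2.2
  rw [h] at this
  obtain ⟨k, hk⟩ := this
  simp only [pow_zero, div_one] at hk
  have h0 : (0:ℚ) ≤ k := hk ▸ hq.1
  have h1 : (k:ℚ) ≤ 1 := hk ▸ hq.2.1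
  have h0' : 0 ≤ k := by exact_mod_cast h0
  have h1' : k ≤ 1 := by exact_mod_cast h1
  interval_cases k
  · left; rw [hk]; norm_num
  · right; rw [hk]; norm_num

lemma level_pos {q : ℚ} (hq : InZ q) (h0 : 0 < q) (h1 : q < 1) : 1 ≤ level q := by
  by_contra h
  push_neg at h
  interval_cases hl : level q
  · rcases level_zero_cases hq hl with h' | h' <;> simp [h'] at h0 h1

/-- For a dyadic of positive level `n`, both `q - 2⁻ⁿ` and `q + 2⁻ⁿ` are
multiples of `2^{-(n-1)}`. -/
lemma Mq_pred {q : ℚ} (hq : IsDyadic q) (h : 1 ≤ level q) :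
    Mq (q - (1/2:ℚ) ^ level q) (level q - 1) ∧ Mq (q + (1/2:ℚ) ^ level q) (level q - 1) := by
  obtain ⟨m, hm⟩ : ∃ m, level q = m + 1 := ⟨level q - 1, by omega⟩
  have hM := Mq_level hq
  rw [hm] at hM ⊢
  simp only [Nat.add_sub_cancel]
  obtain ⟨k, hk⟩ := hM
  rcases Int.even_or_odd k with ⟨j, hj⟩ | ⟨j, hj⟩
  · exfalso
    have : Mq q m := ⟨j, by rw [hk, hj]; push_cast; field_simp; ring⟩
    have := level_le this
    omega
  · constructor
    · refine ⟨j, ?_⟩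
      rw [hk, hj, half_pow]; push_cast; field_simp; ring
    · refine ⟨j+1, ?_⟩
      rw [hk, hj, half_pow]; push_cast; field_simp; ring

lemma rnb_eq {q : ℚ} (h : 1 ≤ level q) : rnb q = q + (1/2:ℚ) ^ level q := by
  rw [rnb, if_neg (by omega)]

lemma lnb_eq {q : ℚ} (h : 1 ≤ level q) : lnb q = q - (1/2:ℚ) ^ level q := by
  rw [lnb, if_neg (by omega)]

lemma level_rnb_lt {q : ℚ} (hq : IsDyadic q) (h : 1 ≤ level q) : level (rnb q) < level q := by
  rw [rnb_eq h]
  have := level_le (Mq_pred hq h).2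
  omega

lemma level_lnb_lt {q : ℚ} (hq : IsDyadic q) (h : 1 ≤ level q) : level (lnb q) < level q := by
  rw [lnb_eq h]
  have := level_le (Mq_pred hq h).1
  omega

lemma lt_rnb {q : ℚ} (h : 1 ≤ level q) : q < rnb q := by
  rw [rnb_eq h]
  have : (0:ℚ) < (1/2)^level q := by positivity
  linarith

lemma lnb_lt {q : ℚ} (h : 1 ≤ level q) : lnb q < q := by
  rw [lnb_eq h]
  have : (0:ℚ) < (1/2)^level q := by positivity
  linarith

lemma ne_zero_of_level {q : ℚ} (h : 1 ≤ level q) : q ≠ 0 := by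
  intro rfl'; rw [rfl', level_zero'] at h; omega

lemma ne_one_of_level {q : ℚ} (h : 1 ≤ level q) : q ≠ 1 := by
  intro rfl'; rw [rfl', level_one'] at h; omega

lemma InZ_rnb {q : ℚ} (hq : InZ q) (h : 1 ≤ level q) : InZ (rnb q) := by
  have hq1 : q < 1 := lt_of_le_of_ne hq.2.1 (ne_one_of_level h)
  have hle : rnb q ≤ 1 := by
    have := gap (Mq_level hq.2.2) (Mq_mono Mq_one_zero (Nat.zero_le _)) hq1
    rw [rnb_eq h]; linarith
  refine ⟨le_trans hq.1 (le_of_lt (lt_rnb h)), hle, ?_⟩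
  rw [rnb_eq h]
  exact Mq_dyadic (Mq_pred hq.2.2 h).2

lemma InZ_lnb {q : ℚ} (hq : InZ q) (h : 1 ≤ level q) : InZ (lnb q) := by
  have hq0 : 0 < q := lt_of_le_of_ne hq.1 (Ne.symm (ne_zero_of_level h))
  have hle : 0 ≤ lnb q := by
    have := gap (Mq_mono Mq_zero_zero (Nat.zero_le _)) (Mq_level hq.2.2) hq0
    rw [lnb_eq h]; linarith
  refine ⟨hle, le_trans (le_of_lt (lnb_lt h)) hq.2.1, ?_⟩
  rw [lnb_eq h]
  exact Mq_dyadic (Mq_pred hq.2.2 h).1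

lemma Mq_rnb {q : ℚ} (hq : IsDyadic q) {n : ℕ} (h : 1 ≤ level q) (hn : level q ≤ n + 1) :
    Mq (rnb q) n := by
  rw [rnb_eq h]
  exact Mq_mono (Mq_pred hq h).2 (by omega)

lemma Mq_lnb {q : ℚ} (hq : IsDyadic q) {n : ℕ} (h : 1 ≤ level q) (hn : level q ≤ n + 1) :
    Mq (lnb q) n := by
  rw [lnb_eq h]
  exact Mq_mono (Mq_pred hq h).1 (by omega)

/-- Interior points of an interval between consecutive multiples of `2⁻ᵉ`
have level `> e`. -/
lemma INT {p x : ℚ} {e : ℕ} (hp : Mq p e) (hx : IsDyadic x)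
    (h1 : p < x) (h2 : x < p + (1/2:ℚ)^e) : e < level x := by
  by_contra h
  push_neg at h
  have hMx : Mq x e := Mq_mono (Mq_level hx) h
  have := gap hp hMx h1
  linarith

lemma InZ_between {p P x : ℚ} {n : ℕ} (hp : InZ p) (hP : InZ P)
    (h1 : p ≤ x) (h2 : x ≤ P) (hM : Mq x n) : InZ x :=
  ⟨le_trans hp.1 h1, le_trans h2 hP.2.1, Mq_dyadic hM⟩

lemma exists_apex {p q : ℚ} (hp : InZ p) (hpq : p ≤ q) :
    ∃ w, InZ w ∧ p ≤ w ∧ w ≤ q ∧ ∀ r, InZ r → p ≤ r → r ≤ q → level w ≤ level r := by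
  have hne : (level '' {r | InZ r ∧ p ≤ r ∧ r ≤ q}).Nonempty :=
    ⟨level p, p, ⟨hp, le_refl _, hpq⟩, rfl⟩
  obtain ⟨w, ⟨hw, hw1, hw2⟩, hwl⟩ := Nat.sInf_mem hne
  exact ⟨w, hw, hw1, hw2, fun r hr h1 h2 => hwl ▸ Nat.sInf_le ⟨r, ⟨hr, h1, h2⟩, rfl⟩⟩

lemma InZ_zero : InZ 0 := ⟨le_refl _, by norm_num, 0, 0, by norm_num⟩
lemma InZ_one : InZ 1 := ⟨by norm_num, le_refl _, 1, 0, by norm_num⟩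

end VPAux
namespace VPAux

section VP

variable {a : ℝ} {ρ : ℚ → ℚ → ℝ}

lemma VP.symm (hρ : IsVPath a ρ) (z z' : ℚ) : ρ z z' = ρ z' z := hρ.1 z z'
lemma VP.diag (hρ : IsVPath a ρ) (z : ℚ) : ρ z z = 0 := hρ.2.1 z
lemma VP.nonneg (hρ : IsVPath a ρ) {z z' : ℚ} (h : InZ z) (h' : InZ z') : 0 ≤ ρ z z' :=
  hρ.2.2.1 z z' h h'
lemma VP.base (hρ : IsVPath a ρ) : ρ 0 1 = 1 := hρ.2.2.2.1
lemma VP.C1 (hρ : IsVPath a ρ) {z z' : ℚ} (h : InZ z) (h' : InZ z') (hlt : z < z')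
    (h1 : 1 ≤ level z) (h2 : level z' ≤ level z) : ρ z z' = a ^ level z + ρ (rnb z) z' :=
  hρ.2.2.2.2.1 z z' h h' hlt h1 h2
lemma VP.C2 (hρ : IsVPath a ρ) {z z' : ℚ} (h : InZ z) (h' : InZ z') (hlt : z < z')
    (h2 : level z < level z') : ρ z z' = ρ z (lnb z') + a ^ level z' :=
  hρ.2.2.2.2.2 z z' h h' hlt h2

/-- Unfolding one right-step, regardless of the level of `y`. -/
lemma STEP_R (hρ : IsVPath a ρ) :
    ∀ n x y, level y = n → InZ x → InZ y → 1 ≤ level x → rnb x ≤ y →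
      ρ x y = a ^ (level x) + ρ (rnb x) y := by
  intro n
  induction n using Nat.strong_induction_on with
  | _ n IH =>
    intro x y hn hx hy hlx hry
    have hxy : x < y := lt_of_lt_of_le (lt_rnb hlx) hry
    rcases le_or_gt (level y) (level x) with hc | hc
    · exact VP.C1 hρ hx hy hxy hlx hc
    · -- level x < level y ; unfold from the right
      have hly : 1 ≤ level y := by omega
      have hrx_lt : level (rnb x) < level x := level_rnb_lt hx.2.2 hlx
      have hrxy : rnb x < y := by
        rcases lt_or_eq_of_le hry with h | h
        · exact h
        · exfalso; rw [h] at hrx_lt; omega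
      have hMrnb : Mq (rnb x) (level y) := Mq_mono (Mq_level (InZ_rnb hx hlx).2.2) (by omega)
      have hgap := gap hMrnb (Mq_level hy.2.2) hrxy
      have hrleq : rnb x ≤ lnb y := by rw [lnb_eq hly]; linarith
      have hlnby : InZ (lnb y) := InZ_lnb hy hly
      have hlny_lt : level (lnb y) < level y := level_lnb_lt hy.2.2 hly
      have h1 := VP.C2 hρ hx hy hxy hc
      have h2 := IH (level (lnb y)) (by omega) x (lnb y) rfl hx hlnby hlx hrleq
      have h3 := VP.C2 hρ (InZ_rnb hx hlx) hy hrxy (by omega)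
      rw [h1, h2, h3]; ring

/-- Unfolding one left-step, regardless of the level of `x`. -/
lemma STEP_L (hρ : IsVPath a ρ) :
    ∀ n x y, level x = n → InZ x → InZ y → 1 ≤ level y → x ≤ lnb y →
      ρ x y = ρ x (lnb y) + a ^ (level y) := by
  intro n
  induction n using Nat.strong_induction_on with
  | _ n IH =>
    intro x y hn hx hy hly hxl
    have hxy : x < y := lt_of_le_of_lt hxl (lnb_lt hly)
    rcases lt_or_ge (level x) (level y) with hc | hc
    · exact VP.C2 hρ hx hy hxy hc
    · -- level y ≤ level x
      have hlx : 1 ≤ level x := by omega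
      have hlny_lt : level (lnb y) < level y := level_lnb_lt hy.2.2 hly
      have hxlnb : x < lnb y := by
        rcases lt_or_eq_of_le hxl with h | h
        · exact h
        · exfalso; rw [← h] at hlny_lt; omega
      have hMlnb : Mq (lnb y) (level x) := Mq_mono (Mq_level (InZ_lnb hy hly).2.2) (by omega)
      have hgap := gap (Mq_level hx.2.2) hMlnb hxlnb
      have hrleq : rnb x ≤ lnb y := by rw [rnb_eq hlx]; linarith
      have hrnbx : InZ (rnb x) := InZ_rnb hx hlx
      have hlnx_lt : level (rnb x) < level x := level_rnb_lt hx.2.2 hlx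
      have h1 := VP.C1 hρ hx hy hxy hlx hc
      have h2 := IH (level (rnb x)) (by omega) (rnb x) y rfl hrnbx hy hly hrleq
      have h3 := VP.C1 hρ hx (InZ_lnb hy hly) hxlnb hlx (by omega)
      rw [h1, h2, h3]; ring

end VP

end VPAux
namespace VPAux

section Mirror

variable {a : ℝ} {ρ : ℚ → ℚ → ℝ}

lemma Mq_mirror {q : ℚ} {n : ℕ} (h : Mq q n) : Mq (1 - q) n := by
  obtain ⟨k, hk⟩ := h
  refine ⟨2^n - k, ?_⟩
  rw [hk]; push_cast; field_simp

lemma InZ_mirror {q : ℚ} (h : InZ q) : InZ (1 - q) := by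
  refine ⟨by linarith [h.2.1], by linarith [h.1], ?_⟩
  obtain ⟨k, n, hk⟩ := h.2.2
  exact Mq_dyadic (Mq_mirror ⟨k, hk⟩)

lemma level_mirror {q : ℚ} (h : IsDyadic q) : level (1 - q) = level q := by
  apply le_antisymm
  · exact level_le (Mq_mirror (Mq_level h))
  · have h' : IsDyadic (1 - q) := Mq_dyadic (Mq_mirror (Mq_level h))
    have := level_le (Mq_mirror (Mq_level h'))
    simpa using this

lemma rnb_mirror {q : ℚ} (h : IsDyadic q) : rnb (1 - q) = 1 - lnb q := by
  rcases Nat.eq_zero_or_pos (level q) with h0 | h0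
  · rw [rnb, if_pos (by rw [level_mirror h]; exact h0), lnb, if_pos h0]
  · rw [rnb_eq (by rw [level_mirror h]; omega), lnb_eq h0, level_mirror h]
    ring

lemma lnb_mirror {q : ℚ} (h : IsDyadic q) : lnb (1 - q) = 1 - rnb q := by
  rcases Nat.eq_zero_or_pos (level q) with h0 | h0
  · rw [lnb, if_pos (by rw [level_mirror h]; exact h0), rnb, if_pos h0]
  · rw [lnb_eq (by rw [level_mirror h]; omega), rnb_eq h0, level_mirror h]
    ring

/-- The reflected kernel is again a V-path kernel. -/
lemma VP_mirror (hρ : IsVPath a ρ) : IsVPath a (fun p q => ρ (1 - p) (1 - q)) := by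
  refine ⟨fun z z' => VP.symm hρ _ _, fun z => VP.diag hρ _,
    fun z z' hz hz' => VP.nonneg hρ (InZ_mirror hz) (InZ_mirror hz'), ?_, ?_, ?_⟩
  · show ρ (1 - 0) (1 - 1) = 1
    norm_num
    rw [VP.symm hρ]; exact VP.base hρ
  · -- clause 1
    intro z z' hz hz' hlt h1 h2
    have hzd := hz.2.2
    set p := 1 - z' with hp
    set q := 1 - z with hq
    have hpq : p < q := by rw [hp, hq]; linarith
    have hpZ : InZ p := InZ_mirror hz'
    have hqZ : InZ q := InZ_mirror hz
    have hlq : level q = level z := level_mirror hzd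
    have hlp : level p = level z' := level_mirror hz'.2.2
    have hlnbq : 1 - rnb z = lnb q := by rw [hq, lnb_mirror hzd]
    show ρ q p = a ^ level z + ρ (1 - rnb z) p
    rw [hlnbq, VP.symm hρ q p, VP.symm hρ (lnb q) p]
    have hstep : ρ p q = ρ p (lnb q) + a ^ level q := by
      apply STEP_L hρ (level p) p q rfl hpZ hqZ (by omega)
      have := gap (Mq_mono (Mq_level hpZ.2.2) (by omega : level p ≤ level q))
        (Mq_level hqZ.2.2) hpq
      rw [lnb_eq (by omega : 1 ≤ level q)]; linarith
    rw [hstep, hlq]; ring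
  · -- clause 2
    intro z z' hz hz' hlt h2
    set p := 1 - z' with hp
    set q := 1 - z with hq
    have hpq : p < q := by rw [hp, hq]; linarith
    have hpZ : InZ p := InZ_mirror hz'
    have hqZ : InZ q := InZ_mirror hz
    have hlq : level q = level z := level_mirror hz.2.2
    have hlp : level p = level z' := level_mirror hz'.2.2
    have hrnbp : 1 - lnb z' = rnb p := by rw [hp, rnb_mirror hz'.2.2]
    show ρ q p = ρ q (1 - lnb z') + a ^ level z'
    rw [hrnbp, VP.symm hρ q p, VP.symm hρ q (rnb p)]
    have hstep : ρ p q = a ^ level p + ρ (rnb p) q := by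
      apply STEP_R hρ (level q) p q rfl hpZ hqZ (by omega)
      have := gap (Mq_level hpZ.2.2)
        (Mq_mono (Mq_level hqZ.2.2) (by omega : level q ≤ level p)) hpq
      rw [rnb_eq (by omega : 1 ≤ level p)]; linarith
    rw [hstep, hlp]; ring

end Mirror

end VPAux
namespace VPAux

section Paths

variable {a : ℝ} {ρ : ℚ → ℚ → ℝ}

/-- Splitting of `ρ` at a point `v` when `x` lies strictly between `lnb v` and `v`:
the V-path from `x` to any `y ≥ v` passes through `v`. -/
lemma THRU (hρ : IsVPath a ρ) :
    ∀ n x v y, level x = n → InZ x → InZ v → InZ y → lnb v < x → x < v → v ≤ y →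
      1 ≤ level v → ρ x y = ρ x v + ρ v y := by
  intro n
  induction n using Nat.strong_induction_on with
  | _ n IH =>
    intro x v y hn hx hv hy h1 h2 h3 hlv
    have hveq : v = lnb v + (1/2:ℚ) ^ level v := by rw [lnb_eq hlv]; ring
    have hlx : level v < level x := by
      apply INT (Mq_lnb hv.2.2 hlv (by omega)) hx.2.2 h1
      rw [← hveq]; exact h2
    have hrx : rnb x ≤ v := by
      have := gap (Mq_level hx.2.2) (Mq_mono (Mq_level hv.2.2) (by omega)) h2
      rw [rnb_eq (by omega)]; linarith
    have hxInZ' : InZ (rnb x) := InZ_rnb hx (by omega)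
    have e1 := STEP_R hρ (level y) x y rfl hx hy (by omega) (le_trans hrx h3)
    have e2 := STEP_R hρ (level v) x v rfl hx hv (by omega) hrx
    rcases eq_or_lt_of_le hrx with heq | hlt
    · rw [e1, e2, heq, VP.diag hρ]; ring
    · have e3 := IH (level (rnb x)) (by
        have := level_rnb_lt hx.2.2 (by omega : 1 ≤ level x); omega)
        (rnb x) v y rfl hxInZ' hv hy (lt_trans h1 (lt_rnb (by omega))) hlt h3 hlv
      rw [e1, e2, e3]; ring

/-- Mirror version: splitting at `v` when `y` lies strictly between `v` and `rnb v`. -/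
lemma THRU_L (hρ : IsVPath a ρ) {x v y : ℚ} (hx : InZ x) (hv : InZ v) (hy : InZ y)
    (h1 : x ≤ v) (h2 : v < y) (h3 : y < rnb v) (hlv : 1 ≤ level v) :
    ρ x y = ρ x v + ρ v y := by
  have hm := VP_mirror hρ
  have h := THRU hm (level (1 - y)) (1 - y) (1 - v) (1 - x) rfl
    (InZ_mirror hy) (InZ_mirror hv) (InZ_mirror hx)
    (by rw [lnb_mirror hv.2.2]; linarith)
    (by linarith) (by linarith)
    (by rw [level_mirror hv.2.2]; exact hlv)
  simp only [sub_sub_cancel] at h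
  rw [VP.symm hρ x y, VP.symm hρ x v, VP.symm hρ v y]
  rw [h]; ring

end Paths

end VPAux
namespace VPAux

section Bounds

variable {a : ℝ} {ρ : ℚ → ℚ → ℝ}

/-- Climbing bound: for `x` strictly inside an interval of consecutive multiples
of `2⁻ᵉ`, the V-path distance from `x` to the right endpoint is at most
`a^{e+1} + ⋯ + a^{level x}`. -/
lemma RBOUND (ha0 : 0 < a) (ha : a < 1/2) (hρ : IsVPath a ρ) :
    ∀ n p x P, level x = n → Mq p e → InZ x → InZ P → P = p + (1/2:ℚ)^e →
      p < x → x < P →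
      (1 - a) * ρ x P + a ^ (level x + 1) ≤ a ^ (e + 1) := by
  intro n
  induction n using Nat.strong_induction_on with
  | _ n IH =>
    intro p x P hn hp hx hP hPeq h1 h2
    have ha1 : a < 1 := by linarith
    have hlx : e < level x := INT hp hx.2.2 h1 (hPeq ▸ h2)
    have hlx1 : 1 ≤ level x := by omega
    have hMP : Mq P e := by
      obtain ⟨k, hk⟩ := hp
      exact ⟨k + 1, by rw [hPeq, hk, half_pow]; push_cast; field_simp⟩
    have hrx : rnb x ≤ P := by
      have := gap (Mq_level hx.2.2) (Mq_mono hMP (by omega)) h2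
      rw [rnb_eq hlx1]; linarith
    have e1 := STEP_R hρ (level P) x P rfl hx hP hlx1 hrx
    have hpow : a ^ level x ≤ a ^ (e+1) :=
      pow_le_pow_of_le_one (le_of_lt ha0) (le_of_lt ha1) (by omega)
    have hps : a ^ (level x + 1) = a * a ^ level x := by ring
    rcases eq_or_lt_of_le hrx with heq | hlt
    · rw [e1, heq, VP.diag hρ]
      calc (1-a) * (a ^ level x + 0) + a ^ (level x + 1)
          = a ^ level x := by rw [hps]; ring
        _ ≤ a ^ (e+1) := hpow
    · have hrlt : level (rnb x) < level x := level_rnb_lt hx.2.2 hlx1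
      have hrZ : InZ (rnb x) := InZ_rnb hx hlx1
      have ih := IH (level (rnb x)) (by omega) p (rnb x) P rfl hp hrZ hP hPeq
        (lt_trans h1 (lt_rnb hlx1)) hlt
      rw [e1]
      have hpow2 : a ^ level x ≤ a ^ (level (rnb x) + 1) :=
        pow_le_pow_of_le_one (le_of_lt ha0) (le_of_lt ha1) (by omega)
      calc (1-a) * (a ^ level x + ρ (rnb x) P) + a ^ (level x + 1)
          = (1-a) * ρ (rnb x) P + a ^ level x := by rw [hps]; ring
        _ ≤ (1-a) * ρ (rnb x) P + a ^ (level (rnb x) + 1) := by linarith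
        _ ≤ a ^ (e+1) := ih

/-- Weak form of the climbing bound. -/
lemma RBOUND' (ha0 : 0 < a) (ha : a < 1/2) (hρ : IsVPath a ρ)
    {p x P : ℚ} {e : ℕ} (hp : Mq p e) (hx : InZ x) (hP : InZ P)
    (hPeq : P = p + (1/2:ℚ)^e) (h1 : p < x) (h2 : x < P) :
    ρ x P ≤ a ^ e := by
  have h := RBOUND ha0 ha hρ (level x) p x P rfl hp hx hP hPeq h1 h2
  have h1a : 0 < 1 - a := by linarith
  have hpow : a ^ (e+1) ≤ (1-a) * a ^ e := by
    have : a ^ (e+1) = a * a ^ e := by ring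
    nlinarith [pow_pos ha0 e]
  nlinarith [pow_pos ha0 (level x + 1)]

/-- Key sharp lower bound: going down from `z'` to the left endpoint plus going
up to the right endpoint of the surrounding dyadic interval costs at least
`a^{m+1}/(1-a)`. -/
lemma DOWNUP (ha0 : 0 < a) (ha : a < 1/2) (hρ : IsVPath a ρ) :
    ∀ n m (p z' P : ℚ), level z' - m = n → Mq p m → InZ p → InZ z' → InZ P →
      P = p + (1/2:ℚ)^m → p < z' → z' < P →
      a ^ (m+1) ≤ (1 - a) * (ρ p z' + ρ z' P) := by
  intro n
  induction n using Nat.strong_induction_on with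
  | _ n IH =>
    intro m p z' P hn hp hpZ hz' hP hPeq h1 h2
    have ha1 : a < 1 := by linarith
    have hlz : m < level z' := INT hp hz'.2.2 h1 (hPeq ▸ h2)
    set mid := p + (1/2:ℚ)^(m+1) with hmid
    have hmidM : Mq mid (m+1) := by
      obtain ⟨k, hk⟩ := hp
      refine ⟨2*k + 1, ?_⟩
      rw [hmid, hk, half_pow]
      push_cast
      rw [div_add_div _ _ (by positivity) (by positivity), div_eq_div_iff (by positivity) (by positivity)]
      ring

    have hhalf : (1/2:ℚ)^(m+1) + (1/2:ℚ)^(m+1) = (1/2:ℚ)^m := by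
      rw [pow_succ]; ring
    have hpmid : p < mid := by
      have : (0:ℚ) < (1/2)^(m+1) := by positivity
      rw [hmid]; linarith
    have hmidP : mid < P := by
      rw [hmid, hPeq]
      have : (0:ℚ) < (1/2)^(m+1) := by positivity
      linarith [hhalf]
    have hmidZ : InZ mid := InZ_between hpZ hP (le_of_lt hpmid) (le_of_lt hmidP) hmidM
    have hlmid : level mid = m + 1 := by
      have h' := INT hp hmidZ.2.2 hpmid (by rw [hmid, hPeq] at *; linarith [hhalf])
      have := level_le hmidM
      omega
    have hrnbmid : rnb mid = P := by
      rw [rnb_eq (by omega), hlmid, hmid, hPeq]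
      linarith [hhalf]
    have hlnbmid : lnb mid = p := by
      rw [lnb_eq (by omega), hlmid, hmid]
      ring
    have hmidP_rho : ρ mid P = a ^ (m+1) := by
      have := STEP_R hρ (level P) mid P rfl hmidZ hP (by omega) (le_of_eq hrnbmid)
      rw [this, hrnbmid, VP.diag hρ, hlmid]; ring
    have hpmid_rho : ρ p mid = a ^ (m+1) := by
      have := STEP_L hρ (level p) p mid rfl hpZ hmidZ (by omega) (le_of_eq hlnbmid.symm)
      rw [this, hlnbmid, VP.diag hρ, hlmid]; ring
    rcases lt_trichotomy z' mid with hc | hc | hc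
    · -- z' in (p, mid)
      have hlz2 : m + 1 < level z' := INT (Mq_mono hp (by omega)) hz'.2.2 h1
        (by rw [← hmid]; exact hc)
      have ih := IH (level z' - (m+1)) (by omega) (m+1) p z' mid rfl
        (Mq_mono hp (by omega)) hpZ hz' hmidZ (by rw [hmid]) h1 hc
      have hsplit : ρ z' P = ρ z' mid + ρ mid P := by
        apply THRU hρ (level z') z' mid P rfl hz' hmidZ hP
          (by rw [hlnbmid]; exact h1) hc (le_of_lt hmidP) (by omega)
      rw [hsplit, hmidP_rho]
      calc a^(m+1) = a^(m+1+1) + (1-a) * a^(m+1) := by ring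
        _ ≤ (1-a) * (ρ p z' + ρ z' mid) + (1-a) * a^(m+1) := by linarith
        _ = (1-a) * (ρ p z' + (ρ z' mid + a^(m+1))) := by ring
    · -- z' = mid
      rw [hc, hpmid_rho, hmidP_rho]
      nlinarith [pow_pos ha0 (m+1)]
    · -- z' in (mid, P)
      have hPeq2 : P = mid + (1/2:ℚ)^(m+1) := by rw [hmid, hPeq]; linarith [hhalf]
      have hlz2 : m + 1 < level z' := INT hmidM hz'.2.2 hc (by rw [← hPeq2]; exact h2)
      have ih := IH (level z' - (m+1)) (by omega) (m+1) mid z' P rfl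
        hmidM hmidZ hz' hP hPeq2 hc h2
      have hsplit : ρ p z' = ρ p mid + ρ mid z' := by
        apply THRU_L hρ hpZ hmidZ hz' (le_of_lt hpmid) hc
          (by rw [hrnbmid]; exact h2) (by omega)
      rw [hsplit, hpmid_rho]
      calc a^(m+1) = a^(m+1+1) + (1-a) * a^(m+1) := by ring
        _ ≤ (1-a) * (ρ mid z' + ρ z' P) + (1-a) * a^(m+1) := by linarith
        _ = (1-a) * (a^(m+1) + ρ mid z' + ρ z' P) := by ring

end Bounds

end VPAux
namespace VPAux

section Mono

variable {a : ℝ} {ρ : ℚ → ℚ → ℝ}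

/-- Monotonicity towards a local minimum on the right: if `v` has minimal level on
`[z', v]`, moving the left endpoint closer to `v` decreases `ρ`. -/
lemma MONO_core (ha0 : 0 < a) (ha : a < 1/2) (hρ : IsVPath a ρ) :
    ∀ n z' x v, level z' = n → InZ z' → InZ x → InZ v → 0 < z' → z' < x → x ≤ v →
      (∀ r, InZ r → z' ≤ r → r ≤ v → level v ≤ level r) →
      ρ x v ≤ ρ z' v := by
  intro n
  induction n using Nat.strong_induction_on with
  | _ n IH =>
    intro z' x v hn hz' hx hv h0 h1 h2 hmin
    have hz'v : z' < v := lt_of_lt_of_le h1 h2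
    have hz'1 : z' < 1 := lt_of_lt_of_le hz'v hv.2.1
    have hlz' : 1 ≤ level z' := level_pos hz' h0 hz'1
    have hlv : level v ≤ level z' := hmin z' hz' (le_refl _) (le_of_lt hz'v)
    set P := rnb z' with hPdef
    have hPeq : P = z' + (1/2:ℚ)^(level z') := rnb_eq hlz'
    have hPle : P ≤ v := by
      have := gap (Mq_level hz'.2.2) (Mq_mono (Mq_level hv.2.2) hlv) hz'v
      rw [hPeq]; linarith
    have hPZ : InZ P := InZ_rnb hz' hlz'
    have hlP : level P < level z' := level_rnb_lt hz'.2.2 hlz'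
    have hz'P : z' < P := lt_rnb hlz'
    have e1 : ρ z' v = a ^ level z' + ρ P v :=
      STEP_R hρ (level v) z' v rfl hz' hv hlz' hPle
    have hapos : 0 ≤ a ^ level z' := le_of_lt (pow_pos ha0 _)
    rcases lt_trichotomy x P with hc | hc | hc
    · -- x strictly inside (z', P)
      rcases eq_or_lt_of_le hPle with hPv | hPv
      · -- P = v
        have := RBOUND' ha0 ha hρ (Mq_level hz'.2.2) hx hv
          (by rw [← hPv, hPeq]) h1 (by rw [hPv] at hc; exact hc)
        rw [e1, hPv, VP.diag hρ]
        linarith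
      · -- P < v : split at P
        have hlPpos : 1 ≤ level P := by
          apply level_pos hPZ (lt_trans h0 hz'P)
            (lt_of_lt_of_le hPv hv.2.1)
        have hlnbP : lnb P ≤ z' := by
          by_contra hcon
          push_neg at hcon
          have hI : level z' < level (lnb P) := by
            apply INT (Mq_level hz'.2.2) (InZ_lnb hPZ hlPpos).2.2 hcon
            rw [← hPeq]; exact lnb_lt hlPpos
          have := level_lnb_lt hPZ.2.2 hlPpos
          omega
        have hsplit : ρ x v = ρ x P + ρ P v := by
          apply THRU hρ (level x) x P v rfl hx hPZ hv
            (lt_of_le_of_lt hlnbP h1) hc hPle hlPpos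
        have hrb := RBOUND' ha0 ha hρ (Mq_level hz'.2.2) hx hPZ hPeq h1 hc
        rw [hsplit, e1]
        linarith
    · rw [hc, e1]; linarith [VP.nonneg hρ hPZ hv]
    · -- P < x : induction
      have ih := IH (level P) (by omega) P x v rfl hPZ hx hv
        (lt_trans h0 hz'P) hc h2
        (fun r hr hr1 hr2 => hmin r hr (le_trans (le_of_lt hz'P) hr1) hr2)
      rw [e1]
      linarith

/-- Monotonicity away from a local minimum on the left: if `v` has minimal level on
`[v, y]` and `y < 1`, moving the left endpoint right from `v` decreases `ρ`. -/
lemma MONO_coreL (ha0 : 0 < a) (ha : a < 1/2) (hρ : IsVPath a ρ) :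
    ∀ n v x y, level y = n → InZ v → InZ x → InZ y → v ≤ x → x < y → y < 1 →
      (∀ r, InZ r → v ≤ r → r ≤ y → level v ≤ level r) →
      ρ x y ≤ ρ v y := by
  intro n
  induction n using Nat.strong_induction_on with
  | _ n IH =>
    intro v x y hn hv hx hy h1 h2 hy1 hmin
    rcases eq_or_lt_of_le h1 with rfl | h1'
    · exact le_refl _
    have hvy : v < y := lt_trans h1' h2
    have hy0 : 0 < y := lt_of_le_of_lt hv.1 hvy
    have hly : 1 ≤ level y := level_pos hy hy0 hy1
    have hlv : level v ≤ level y := hmin y hy (le_of_lt hvy) (le_refl _)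
    set p := lnb y with hpdef
    have hpeq : p = y - (1/2:ℚ)^(level y) := lnb_eq hly
    have hyp : y = p + (1/2:ℚ)^(level y) := by rw [hpeq]; ring
    have hvp : v ≤ p := by
      have := gap (Mq_mono (Mq_level hv.2.2) hlv) (Mq_level hy.2.2) hvy
      rw [hpeq]; linarith
    have hpZ : InZ p := InZ_lnb hy hly
    have hlp : level p < level y := level_lnb_lt hy.2.2 hly
    have hpy : p < y := lnb_lt hly
    have e1 : ρ v y = ρ v p + a ^ level y :=
      STEP_L hρ (level v) v y rfl hv hy hly hvp
    have hapos : 0 ≤ a ^ level y := le_of_lt (pow_pos ha0 _)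
    rcases lt_trichotomy x p with hc | hc | hc
    · -- x < p : recurse on (v, x, p)
      have e2 : ρ x y = ρ x p + a ^ level y :=
        STEP_L hρ (level x) x y rfl hx hy hly (le_of_lt hc)
      have ih := IH (level p) (by omega) v x p rfl hv hx hpZ h1 hc
        (lt_of_lt_of_le hpy (le_of_lt hy1))
        (fun r hr hr1 hr2 => hmin r hr hr1 (le_trans hr2 (le_of_lt hpy)))
      rw [e1, e2]
      linarith
    · -- x = p
      have e2 : ρ x y = a ^ level y := by
        have := STEP_L hρ (level x) x y rfl hx hy hly (le_of_eq hc)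
        rw [this, ← hpdef, ← hc, VP.diag hρ]; ring
      rw [e1, e2]
      linarith [VP.nonneg hρ hv hpZ]
    · -- p < x < y
      have hrb := RBOUND' ha0 ha hρ
        (Mq_mono (Mq_level hpZ.2.2) (le_of_lt hlp)) hx hy hyp hc h2
      rw [e1]
      linarith [VP.nonneg hρ hv hpZ]

end Mono

end VPAux
namespace VPAux

section MonoFull

variable {a : ℝ} {ρ : ℚ → ℚ → ℝ}

/-- Full monotonicity: enlarging the interval to the left increases `ρ`. -/
lemma MONO (ha0 : 0 < a) (ha : a < 1/2) (hρ : IsVPath a ρ) {z' x y : ℚ}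
    (hz' : InZ z') (hx : InZ x) (hy : InZ y) (h1 : z' ≤ x) (h2 : x ≤ y) :
    ρ x y ≤ ρ z' y := by
  rcases eq_or_lt_of_le h1 with rfl | h1
  · exact le_refl _
  rcases eq_or_lt_of_le h2 with rfl | h2
  · rw [VP.diag hρ]; exact VP.nonneg hρ hz' hx
  -- now z' < x < y
  rcases eq_or_lt_of_le hz'.1 with hz0 | hz0
  · -- z' = 0
    subst hz0
    rcases eq_or_lt_of_le hy.2.1 with hy1 | hy1
    · -- y = 1 : use RBOUND from (0,1)
      subst hy1
      have hrb := RBOUND' ha0 ha hρ Mq_zero_zero hx InZ_one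
        (by norm_num) h1 h2
      rw [VP.base hρ]
      simpa using hrb
    · -- y < 1 : MONO_coreL with v = 0
      exact MONO_coreL ha0 ha hρ (level y) 0 x y rfl InZ_zero hx hy
        (le_of_lt h1) h2 hy1
        (fun r _ _ _ => by rw [level_zero']; exact Nat.zero_le _)
  · -- 0 < z'
    obtain ⟨v, hvZ, hv1, hv2, hmin⟩ := exists_apex hz' (le_of_lt (lt_trans h1 h2))
    rcases le_or_gt x v with hxv | hvx
    · -- x ≤ v
      rcases eq_or_lt_of_le hv2 with hveq | hvy
      · -- v = y
        subst hveq
        exact MONO_core ha0 ha hρ (level z') z' x v rfl hz' hx hvZ hz0 h1 hxv hmin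
      · -- v < y
        have hz'v : z' < v := lt_of_lt_of_le h1 hxv
        have hlv : 1 ≤ level v :=
          level_pos hvZ (lt_trans hz0 hz'v) (lt_of_lt_of_le hvy hy.2.1)
        have hlnbv : lnb v < z' := by
          by_contra hcon
          push_neg at hcon
          have := hmin (lnb v) (InZ_lnb hvZ hlv) hcon
            (le_trans (le_of_lt (lnb_lt hlv)) hv2)
          have := level_lnb_lt hvZ.2.2 hlv
          omega
        have hsz' : ρ z' y = ρ z' v + ρ v y :=
          THRU hρ (level z') z' v y rfl hz' hvZ hy hlnbv hz'v hv2 hlv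
        rcases eq_or_lt_of_le hxv with hxeq | hxlt
        · rw [hsz', hxeq]
          linarith [VP.nonneg hρ hz' hvZ]
        · have hsx : ρ x y = ρ x v + ρ v y :=
            THRU hρ (level x) x v y rfl hx hvZ hy (lt_trans hlnbv h1) hxlt hv2 hlv
          have hmc := MONO_core ha0 ha hρ (level z') z' x v rfl hz' hx hvZ hz0 h1
            (le_of_lt hxlt) (fun r hr hr1 hr2 => hmin r hr hr1 (le_trans hr2 hv2))
          rw [hsz', hsx]
          linarith
    · -- v < x
      have hlv : 1 ≤ level v := by
        apply level_pos hvZ (lt_of_lt_of_le hz0 hv1)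
        exact lt_of_lt_of_le hvx (le_trans (le_of_lt h2) hy.2.1)
      have hyrnb : y < rnb v := by
        by_contra hcon
        push_neg at hcon
        have := hmin (rnb v) (InZ_rnb hvZ hlv)
          (le_trans hv1 (le_of_lt (lt_rnb hlv))) hcon
        have := level_rnb_lt hvZ.2.2 hlv
        omega
      have hy1 : y < 1 := lt_of_lt_of_le hyrnb (InZ_rnb hvZ hlv).2.1
      have m1 : ρ x y ≤ ρ v y := by
        apply MONO_coreL ha0 ha hρ (level y) v x y rfl hvZ hx hy (le_of_lt hvx) h2 hy1
        intro r hr hr1 hr2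
        exact hmin r hr (le_trans hv1 hr1) hr2
      have m2 : ρ v y ≤ ρ z' y := by
        rcases eq_or_lt_of_le hv1 with hveq | hvlt
        · rw [← hveq]
        · have hlnbv : lnb v < z' := by
            by_contra hcon
            push_neg at hcon
            have := hmin (lnb v) (InZ_lnb hvZ hlv) hcon
              (le_trans (le_of_lt (lnb_lt hlv)) hv2)
            have := level_lnb_lt hvZ.2.2 hlv
            omega
          have := THRU hρ (level z') z' v y rfl hz' hvZ hy hlnbv hvlt hv2 hlv
          rw [this]
          linarith [VP.nonneg hρ hz' hvZ]
      exact le_trans m1 m2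

/-- Full monotonicity, mirrored: enlarging the interval to the right increases `ρ`. -/
lemma MONO_R (ha0 : 0 < a) (ha : a < 1/2) (hρ : IsVPath a ρ) {x y z'' : ℚ}
    (hx : InZ x) (hy : InZ y) (hz'' : InZ z'') (h1 : x ≤ y) (h2 : y ≤ z'') :
    ρ x y ≤ ρ x z'' := by
  have hm := VP_mirror hρ
  have h := MONO ha0 ha hm (InZ_mirror hz'') (InZ_mirror hy) (InZ_mirror hx)
    (by simp; linarith) (by simp; linarith)
  simp only [sub_sub_cancel] at h
  rw [VP.symm hρ x y, VP.symm hρ x z'']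
  exact h

end MonoFull

end VPAux
namespace VPAux

section Main

variable {a : ℝ} {ρ : ℚ → ℚ → ℝ}

/-- The main construction when the middle point sits just right of the apex of
the pair `(z, z')`. -/
lemma A_CONSTR (ha0 : 0 < a) (ha : a < 1/2) (hρ : IsVPath a ρ)
    {z z' z'' w : ℚ} (hz : InZ z) (hz' : InZ z') (hz'' : InZ z'') (hw : InZ w)
    (h1 : lnb w < z) (h2 : z ≤ w) (h3 : w < z') (h4 : z' < rnb w) (h5 : rnb w ≤ z'')
    (h6 : 1 ≤ level w) :
    ρ z z'' ≤ ((1 - a) / a) * (ρ z z' + ρ z' z'') := by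
  have ha1 : a < 1 := by linarith
  set m := level w with hm
  set u := rnb w with hu
  have huZ : InZ u := InZ_rnb hw h6
  have hlu : level u < m := level_rnb_lt hw.2.2 h6
  have hwu : w < u := lt_rnb h6
  have hueq : u = w + (1/2:ℚ)^m := rnb_eq h6
  have hzz'' : w < z'' := lt_of_lt_of_le hwu h5
  -- decompositions
  have e1a : ρ z z'' = ρ z w + ρ w z'' := by
    rcases eq_or_lt_of_le h2 with rfl | h2'
    · rw [VP.diag hρ]; ring
    · exact THRU hρ (level z) z w z'' rfl hz hw hz'' h1 h2' (le_of_lt hzz'') h6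
  have e1b : ρ w z'' = a ^ m + ρ u z'' :=
    STEP_R hρ (level z'') w z'' rfl hw hz'' h6 h5
  have e2 : ρ z z' = ρ z w + ρ w z' :=
    THRU_L hρ hz hw hz' h2 h3 h4 h6
  have e3 : ρ z' z'' = ρ z' u + ρ u z'' := by
    rcases eq_or_lt_of_le h5 with heq | h5'
    · rw [heq, VP.diag hρ]; ring
    · -- split at u
      have hu0 : 0 < u := by
        have h0w : 0 ≤ w := hw.1
        linarith
      have hu1 : u < 1 := lt_of_lt_of_le h5' hz''.2.1
      have hluu : 1 ≤ level u := level_pos huZ hu0 hu1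
      have hlnbu : lnb u ≤ w := by
        by_contra hcon
        push_neg at hcon
        have hIl : m < level (lnb u) := by
          apply INT (Mq_level hw.2.2) (InZ_lnb huZ hluu).2.2 hcon
          rw [← hueq]; exact lnb_lt hluu
        have := level_lnb_lt huZ.2.2 hluu
        omega
      exact THRU hρ (level z') z' u z'' rfl hz' huZ hz''
        (lt_of_le_of_lt hlnbu h3) h4 (le_of_lt h5') hluu
  -- the sharp lower bound
  have hdu := DOWNUP ha0 ha hρ (level z' - m) m w z' u rfl (Mq_level hw.2.2)
    hw hz' huZ hueq h3 h4
  -- assemble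
  have hA := VP.nonneg hρ hz hw
  have hB := VP.nonneg hρ hw hz'
  have hC := VP.nonneg hρ hz' huZ
  have hD := VP.nonneg hρ huZ hz''
  have hc1 : (1:ℝ) ≤ (1 - a) / a := by
    rw [le_div_iff₀ ha0]; linarith
  have key : a ^ m ≤ ((1-a)/a) * (ρ w z' + ρ z' u) := by
    rw [div_mul_eq_mul_div, le_div_iff₀ ha0]
    have : a ^ m * a = a ^ (m+1) := by ring
    rw [this]
    linarith [hdu]
  rw [e1a, e1b, e2, e3]
  have expand : ((1-a)/a) * (ρ z w + ρ w z' + (ρ z' u + ρ u z''))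
      = ((1-a)/a) * (ρ z w) + ((1-a)/a) * (ρ u z'') + ((1-a)/a) * (ρ w z' + ρ z' u) := by
    ring
  rw [expand]
  have t1 : ρ z w ≤ ((1-a)/a) * ρ z w := le_mul_of_one_le_left hA hc1
  have t2 : ρ u z'' ≤ ((1-a)/a) * ρ u z'' := le_mul_of_one_le_left hD hc1
  linarith

/-- Mirrored construction. -/
lemma B_CONSTR (ha0 : 0 < a) (ha : a < 1/2) (hρ : IsVPath a ρ)
    {z z' z'' w : ℚ} (hz : InZ z) (hz' : InZ z') (hz'' : InZ z'') (hw : InZ w)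
    (h1 : z'' < rnb w) (h2 : w ≤ z'') (h3 : z' < w) (h4 : lnb w < z') (h5 : z ≤ lnb w)
    (h6 : 1 ≤ level w) :
    ρ z z'' ≤ ((1 - a) / a) * (ρ z z' + ρ z' z'') := by
  have hm := VP_mirror hρ
  have h := A_CONSTR ha0 ha hm (InZ_mirror hz'') (InZ_mirror hz') (InZ_mirror hz)
    (InZ_mirror hw)
    (by rw [lnb_mirror hw.2.2]; linarith)
    (by linarith) (by linarith)
    (by rw [rnb_mirror hw.2.2]; linarith)
    (by rw [rnb_mirror hw.2.2]; linarith)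
    (by rw [level_mirror hw.2.2]; exact h6)
  simp only [sub_sub_cancel] at h
  calc ρ z z'' = ρ z'' z := VP.symm hρ _ _
    _ ≤ ((1-a)/a) * (ρ z'' z' + ρ z' z) := h
    _ = ((1-a)/a) * (ρ z z' + ρ z' z'') := by
        rw [VP.symm hρ z'' z', VP.symm hρ z' z]; ring

/-- Relaxed triangle inequality for ordered triples. -/
lemma RT_ord (ha0 : 0 < a) (ha : a < 1/2) (hρ : IsVPath a ρ)
    {z z' z'' : ℚ} (hz : InZ z) (hz' : InZ z') (hz'' : InZ z'') (hord : z ≤ z'') :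
    ρ z z'' ≤ ((1 - a) / a) * (ρ z z' + ρ z' z'') := by
  have ha1 : a < 1 := by linarith
  have hc1 : (1:ℝ) ≤ (1 - a) / a := by rw [le_div_iff₀ ha0]; linarith
  have hc0 : (0:ℝ) ≤ (1 - a) / a := div_nonneg (by linarith) (le_of_lt ha0)
  have h12 := VP.nonneg hρ hz hz'
  have h23 := VP.nonneg hρ hz' hz''
  -- easy cases: z' outside [z, z'']
  rcases le_or_gt z' z with hout | hin1
  · have := MONO ha0 ha hρ hz' hz hz'' hout hord
    calc ρ z z'' ≤ ρ z' z'' := this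
      _ ≤ ((1-a)/a) * (ρ z z' + ρ z' z'') := by nlinarith
  rcases le_or_gt z'' z' with hout | hin2
  · have := MONO_R ha0 ha hρ hz hz'' hz' hord hout
    calc ρ z z'' ≤ ρ z z' := this
      _ ≤ ((1-a)/a) * (ρ z z' + ρ z' z'') := by nlinarith
  -- main case: z < z' < z''
  obtain ⟨w12, hw12Z, hzw12, hw12z', hmin12⟩ := exists_apex hz (le_of_lt hin1)
  obtain ⟨w23, hw23Z, hz'w23, hw23z'', hmin23⟩ := exists_apex hz' (le_of_lt hin2)
  have hz01 : 0 ≤ z := hz.1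
  have hz''1 : z'' ≤ 1 := hz''.2.1
  have hlz' : 1 ≤ level z' :=
    level_pos hz' (lt_of_le_of_lt hz01 hin1) (lt_of_lt_of_le hin2 hz''1)
  -- direct split if the middle point is itself an apex
  by_cases hsplit1 : w12 = z'
  · have hlnb : lnb z' < z := by
      by_contra hcon
      push_neg at hcon
      have := hmin12 (lnb z') (InZ_lnb hz' hlz') hcon
        (by rw [hsplit1] at *; exact le_of_lt (lnb_lt hlz'))
      rw [hsplit1] at this
      have := level_lnb_lt hz'.2.2 hlz'
      omega
    have := THRU hρ (level z) z z' z'' rfl hz hz' hz'' hlnb hin1 (le_of_lt hin2) hlz'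
    rw [this]
    nlinarith
  by_cases hsplit2 : w23 = z'
  · have hrnb : z'' < rnb z' := by
      by_contra hcon
      push_neg at hcon
      have := hmin23 (rnb z') (InZ_rnb hz' hlz')
        (by rw [hsplit2] at *; exact le_of_lt (lt_rnb hlz')) hcon
      rw [hsplit2] at this
      have := level_rnb_lt hz'.2.2 hlz'
      omega
    have := THRU_L hρ hz hz' hz'' (le_of_lt hin1) hin2 hrnb hlz'
    rw [this]
    nlinarith
  have hw12lt : w12 < z' := lt_of_le_of_ne hw12z' hsplit1
  have hw23gt : z' < w23 := lt_of_le_of_ne hz'w23 (fun h => hsplit2 h.symm)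
  -- facts about w12 available when 0 < z
  rcases eq_or_lt_of_le hz01 with hz0 | hz0
  ·
    -- z'' = 1 is possible; but then we are in the (0,1) case: use DOWNUP directly)
    rcases eq_or_lt_of_le hz''1 with hz''eq | hz''lt
    · -- z = 0, z'' = 1
      have hdu := DOWNUP ha0 ha hρ (level z' - 0) 0 0 z' 1 rfl Mq_zero_zero
        InZ_zero hz' InZ_one (by norm_num) (by rw [← hz0] at hin1; exact hin1)
        (by rw [hz''eq] at hin2; exact hin2)
      rw [← hz0, hz''eq, VP.base hρ]
      rw [← hz0] at h12; rw [hz''eq] at h23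
      rw [le_div_iff₀ ha0] at hc1
      have : a ^ (0+1) = a := by ring
      rw [this] at hdu
      rw [div_mul_eq_mul_div, le_div_iff₀ ha0]
      rw [← hz0, hz''eq] at *
      nlinarith
    · -- z = 0, z'' < 1 : B construction
      have hw23_1 : w23 < 1 := lt_of_le_of_lt hw23z'' hz''lt
      have hw23_0 : 0 < w23 := lt_of_le_of_lt hz'.1 hw23gt
      have hlw23 : 1 ≤ level w23 := level_pos hw23Z hw23_0 hw23_1
      have hB1 : z'' < rnb w23 := by
        by_contra hcon
        push_neg at hcon
        have := hmin23 (rnb w23) (InZ_rnb hw23Z hlw23)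
          (le_trans hz'w23 (le_of_lt (lt_rnb hlw23))) hcon
        have := level_rnb_lt hw23Z.2.2 hlw23
        omega
      have hB4 : lnb w23 < z' := by
        by_contra hcon
        push_neg at hcon
        have := hmin23 (lnb w23) (InZ_lnb hw23Z hlw23) hcon
          (le_trans (le_of_lt (lnb_lt hlw23)) hw23z'')
        have := level_lnb_lt hw23Z.2.2 hlw23
        omega
      have hB5 : z ≤ lnb w23 := by
        rw [← hz0]; exact (InZ_lnb hw23Z hlw23).1
      exact B_CONSTR ha0 ha hρ hz hz' hz'' hw23Z hB1 hw23z'' hw23gt hB4 hB5 hlw23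
  · -- 0 < z : facts about w12
    have hw12_0 : 0 < w12 := lt_of_lt_of_le hz0 hzw12
    have hw12_1 : w12 < 1 := lt_of_lt_of_le (lt_trans hw12lt hin2) hz''1
    have hlw12 : 1 ≤ level w12 := level_pos hw12Z hw12_0 hw12_1
    have hA1 : lnb w12 < z := by
      by_contra hcon
      push_neg at hcon
      have := hmin12 (lnb w12) (InZ_lnb hw12Z hlw12) hcon
        (le_trans (le_of_lt (lnb_lt hlw12)) hw12z')
      have := level_lnb_lt hw12Z.2.2 hlw12
      omega
    have hA4 : z' < rnb w12 := by
      by_contra hcon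
      push_neg at hcon
      have := hmin12 (rnb w12) (InZ_rnb hw12Z hlw12)
        (le_trans hzw12 (le_of_lt (lt_rnb hlw12))) hcon
      have := level_rnb_lt hw12Z.2.2 hlw12
      omega
    by_cases hA5 : rnb w12 ≤ z''
    · exact A_CONSTR ha0 ha hρ hz hz' hz'' hw12Z hA1 hzw12 hw12lt hA4 hA5 hlw12
    · -- then necessarily z ≤ lnb w23 : use B
      push_neg at hA5
      have hz''lt : z'' < 1 := by
        rcases eq_or_lt_of_le hz''1 with h | h
        · exfalso
          have := (InZ_rnb hw12Z hlw12).2.1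
          rw [h] at hA5
          linarith
        · exact h
      have hw23_1 : w23 < 1 := lt_of_le_of_lt hw23z'' hz''lt
      have hw23_0 : 0 < w23 := lt_of_le_of_lt hz'.1 hw23gt
      have hlw23 : 1 ≤ level w23 := level_pos hw23Z hw23_0 hw23_1
      have hB1 : z'' < rnb w23 := by
        by_contra hcon
        push_neg at hcon
        have := hmin23 (rnb w23) (InZ_rnb hw23Z hlw23)
          (le_trans hz'w23 (le_of_lt (lt_rnb hlw23))) hcon
        have := level_rnb_lt hw23Z.2.2 hlw23
        omega
      have hB4 : lnb w23 < z' := by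
        by_contra hcon
        push_neg at hcon
        have := hmin23 (lnb w23) (InZ_lnb hw23Z hlw23) hcon
          (le_trans (le_of_lt (lnb_lt hlw23)) hw23z'')
        have := level_lnb_lt hw23Z.2.2 hlw23
        omega
      have hB5 : z ≤ lnb w23 := by
        by_contra hcon
        push_neg at hcon
        -- contradiction via two INT applications
        have hw23eq : w23 = lnb w23 + (1/2:ℚ)^(level w23) := by
          rw [lnb_eq hlw23]; ring
        have hI1 : level w23 < level w12 := by
          apply INT (Mq_lnb hw23Z.2.2 hlw23 (by omega)) hw12Z.2.2
            (lt_of_lt_of_le hcon hzw12)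
          rw [← hw23eq]
          exact lt_trans hw12lt hw23gt
        have hw12eq : rnb w12 = w12 + (1/2:ℚ)^(level w12) := rnb_eq hlw12
        have hI2 : level w12 < level w23 := by
          apply INT (Mq_level hw12Z.2.2) hw23Z.2.2 (lt_trans hw12lt hw23gt)
          rw [← hw12eq]
          exact lt_of_le_of_lt hw23z'' hA5
        omega
      exact B_CONSTR ha0 ha hρ hz hz' hz'' hw23Z hB1 hw23z'' hw23gt hB4 hB5 hlw23

end Main

end VPAux

open VPAux

/-- The V-path quasi-metric with parameter `a ∈ (0,1/2)` is a `K`-quasi-metric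
with `K = 2(1-a)/a`. -/
theorem vpath_is_quasimetric (a : ℝ) (ha0 : 0 < a) (ha : a < 1 / 2)
    (ρ : ℚ → ℚ → ℝ) (hρ : IsVPath a ρ) :
    ∀ z z' z'' : ℚ, InZ z → InZ z' → InZ z'' →
      ρ z z'' ≤ (2 * (1 - a) / a) * max (ρ z z') (ρ z' z'') := by
  intro z z' z'' hz hz' hz''
  have ha1 : a < 1 := by linarith
  have hc0 : (0:ℝ) ≤ (1 - a) / a := div_nonneg (by linarith) (le_of_lt ha0)
  have h12 := VP.nonneg hρ hz hz'
  have h23 := VP.nonneg hρ hz' hz''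
  have hRT : ρ z z'' ≤ ((1 - a) / a) * (ρ z z' + ρ z' z'') := by
    rcases le_total z z'' with h | h
    · exact RT_ord ha0 ha hρ hz hz' hz'' h
    · have := RT_ord ha0 ha hρ hz'' hz' hz h
      rw [VP.symm hρ z z'']
      rw [VP.symm hρ z'' z', VP.symm hρ z' z] at this
      calc ρ z'' z ≤ ((1-a)/a) * (ρ z' z'' + ρ z z') := this
        _ = ((1-a)/a) * (ρ z z' + ρ z' z'') := by ring
  have hm1 : ρ z z' ≤ max (ρ z z') (ρ z' z'') := le_max_left _ _
  have hm2 : ρ z' z'' ≤ max (ρ z z') (ρ z' z'') := le_max_right _ _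
  calc ρ z z'' ≤ ((1 - a) / a) * (ρ z z' + ρ z' z'') := hRT
    _ ≤ ((1 - a) / a) * (max (ρ z z') (ρ z' z'') + max (ρ z z') (ρ z' z'')) := by
        apply mul_le_mul_of_nonneg_left _ hc0
        linarith
    _ = (2 * (1 - a) / a) * max (ρ z z') (ρ z' z'') := by ring
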